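/- The function f defined on subsets of E ∪ L by f(T) = 2|V(T)| − 3 if T ⊆ E and f(T) = 2|V(T)| if T ∩ L ≠ ∅ is submodular: for all T₁, T₂ ⊆ E ∪ L, f(T₁) + f(T₂) ≥ f(T₁ ∪ T₂) + f(T₁ ∩ T₂). -/

import Mathlib

/-- The set of vertices incident with the edges and loops in `T`. -/
def vSet {V ε : Type*} [DecidableEq V] (ends : ε → Finset V) (T : Finset ε) : Finset V :=
  T.biUnion ends

/-- The count function `f(T) = 2|V(T)| - 3` if `T ⊆ E` (i.e. `T` contains no loops),
and `f(T) = 2|V(T)|` if `T` contains a loop of `L`. -/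
def fCount {V ε : Type*} [DecidableEq V] [DecidableEq ε] (L : Finset ε) (ends : ε → Finset V)
    (T : Finset ε) : ℤ :=
  if (T ∩ L).Nonempty then 2 * (vSet ends T).card else 2 * (vSet ends T).card - 3

/-- The function `f` is submodular on subsets of `E ∪ L`. -/
theorem fCount_submodular {V ε : Type*} [Fintype V] [DecidableEq V] [DecidableEq ε]
    (E L : Finset ε) (ends : ε → Finset V)
    (hdisj : Disjoint E L)
    (hE : ∀ e ∈ E, (ends e).card = 2) (hL : ∀ l ∈ L, (ends l).card = 1)
    (T₁ T₂ : Finset ε) (h₁ : T₁ ⊆ E ∪ L) (h₂ : T₂ ⊆ E ∪ L) :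
    fCount L ends (T₁ ∪ T₂) + fCount L ends (T₁ ∩ T₂) ≤
      fCount L ends T₁ + fCount L ends T₂ := by
  have hu : vSet ends (T₁ ∪ T₂) = vSet ends T₁ ∪ vSet ends T₂ := by
    ext v
    simp only [vSet, Finset.mem_biUnion, Finset.mem_union]
    constructor
    · rintro ⟨e, he | he, hev⟩
      exacts [Or.inl ⟨e, he, hev⟩, Or.inr ⟨e, he, hev⟩]
    · rintro (⟨e, he, hev⟩ | ⟨e, he, hev⟩)
      exacts [⟨e, Or.inl he, hev⟩, ⟨e, Or.inr he, hev⟩]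
  have hi : vSet ends (T₁ ∩ T₂) ⊆ vSet ends T₁ ∩ vSet ends T₂ := by
    intro v hv
    simp only [vSet, Finset.mem_biUnion, Finset.mem_inter] at hv ⊢
    obtain ⟨e, ⟨he1, he2⟩, hev⟩ := hv
    exact ⟨⟨e, he1, hev⟩, ⟨e, he2, hev⟩⟩
  have hcard : (vSet ends (T₁ ∪ T₂)).card + (vSet ends (T₁ ∩ T₂)).card ≤
      (vSet ends T₁).card + (vSet ends T₂).card := by
    calc (vSet ends (T₁ ∪ T₂)).card + (vSet ends (T₁ ∩ T₂)).card
        ≤ (vSet ends T₁ ∪ vSet ends T₂).card + (vSet ends T₁ ∩ vSet ends T₂).card := by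
          rw [hu]; exact Nat.add_le_add_left (Finset.card_le_card hi) _
      _ = (vSet ends T₁).card + (vSet ends T₂).card :=
          Finset.card_union_add_card_inter _ _
  have hcardZ : (2 : ℤ) * (vSet ends (T₁ ∪ T₂)).card + 2 * (vSet ends (T₁ ∩ T₂)).card ≤
      2 * (vSet ends T₁).card + 2 * (vSet ends T₂).card := by
    push_cast
    exact_mod_cast by linarith [hcard]
  have hUL : ((T₁ ∪ T₂) ∩ L).Nonempty ↔ (T₁ ∩ L).Nonempty ∨ (T₂ ∩ L).Nonempty := by
    rw [Finset.union_inter_distrib_right]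
    constructor
    · rintro ⟨x, hx⟩
      rcases Finset.mem_union.1 hx with h | h
      exacts [Or.inl ⟨x, h⟩, Or.inr ⟨x, h⟩]
    · rintro (⟨x, hx⟩ | ⟨x, hx⟩)
      exacts [⟨x, Finset.mem_union_left _ hx⟩, ⟨x, Finset.mem_union_right _ hx⟩]
  have hIL1 : ((T₁ ∩ T₂) ∩ L).Nonempty → (T₁ ∩ L).Nonempty := by
    rintro ⟨x, hx⟩
    simp only [Finset.mem_inter] at hx
    exact ⟨x, Finset.mem_inter.2 ⟨hx.1.1, hx.2⟩⟩
  have hIL2 : ((T₁ ∩ T₂) ∩ L).Nonempty → (T₂ ∩ L).Nonempty := by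
    rintro ⟨x, hx⟩
    simp only [Finset.mem_inter] at hx
    exact ⟨x, Finset.mem_inter.2 ⟨hx.1.2, hx.2⟩⟩
  unfold fCount
  split_ifs with h1 h2 h3 h4 h5 h6 h7 h8 <;>
    first
      | linarith [hcardZ]
      | (exfalso; tauto)
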